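/- The edge polytope of the graph G on 6 vertices with edges {1,2},{2,3},{3,4},{1,4},{1,5},{2,5},{2,6},{3,6} (which contains the 4-cycle 1-2-3-4) is indecomposable. That is, containing a 4-cycle is not sufficient for decomposability. -/

import Mathlib

open scoped BigOperators

/-- `ρ(i,j) = e_i + e_j` -/
noncomputable def rho {d : ℕ} (i j : Fin d) : Fin d → ℝ :=
  fun t => (if t = i then 1 else 0) + (if t = j then 1 else 0)

/-- The edge polytope of a graph `G` on `[d]`. -/
noncomputable def edgePolytope {d : ℕ} (G : SimpleGraph (Fin d)) : Set (Fin d → ℝ) :=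
  convexHull ℝ {x | ∃ i j, G.Adj i j ∧ x = rho i j}

/-- dot product -/
def dotp {d : ℕ} (a x : Fin d → ℝ) : ℝ := ∑ t, a t * x t

/-- a polytope is integral if all its vertices (extreme points) are lattice points -/
def IsIntegralSet {d : ℕ} (P : Set (Fin d → ℝ)) : Prop :=
  ∀ x ∈ Set.extremePoints ℝ P, ∀ t, ∃ z : ℤ, x t = (z : ℝ)

/-- The hyperplane `a·x = b` decomposes `P`: it meets the relative interior of `P`,
both open sides meet `P`, and both closed half-space pieces are integral. -/
def Decomposes {d : ℕ} (P : Set (Fin d → ℝ)) (a : Fin d → ℝ) (b : ℝ) : Prop :=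
  (∃ x ∈ intrinsicInterior ℝ P, dotp a x = b) ∧
  (∃ y ∈ P, dotp a y < b) ∧ (∃ y ∈ P, b < dotp a y) ∧
  IsIntegralSet (P ∩ {x | b ≤ dotp a x}) ∧
  IsIntegralSet (P ∩ {x | dotp a x ≤ b})

/-- The graph on 6 vertices (0-indexed) with edges
(0,1),(1,2),(2,3),(0,3),(0,4),(1,4),(1,5),(2,5). -/
def G5 : SimpleGraph (Fin 6) :=
  SimpleGraph.fromRel (fun i j =>
    (i, j) ∈ ([(0, 1), (1, 2), (2, 3), (0, 3), (0, 4), (1, 4), (1, 5), (2, 5)] :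
      List (Fin 6 × Fin 6)))

def eL : List (Fin 8 × Fin 6) :=
  [(0,0),(0,1), (1,1),(1,2), (2,2),(2,3), (3,0),(3,3),
   (4,0),(4,4), (5,1),(5,4), (6,1),(6,5), (7,2),(7,5)]

noncomputable def V : Fin 8 → Fin 6 → ℝ := fun k c => if (k, c) ∈ eL then 1 else 0

lemma Vnn (k : Fin 8) (c : Fin 6) : 0 ≤ V k c := by unfold V; split <;> norm_num

lemma Vle1 (k : Fin 8) (c : Fin 6) : V k c ≤ 1 := by unfold V; split <;> norm_num

lemma row0 (u : Fin 8 → ℝ) : ∑ k, u k * V k 0 = u 0 + u 3 + u 4 := by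
  simp (config := {decide := true}) [Fin.sum_univ_eight, V, eL]
lemma row1 (u : Fin 8 → ℝ) : ∑ k, u k * V k 1 = u 0 + u 1 + u 5 + u 6 := by
  simp (config := {decide := true}) [Fin.sum_univ_eight, V, eL]
lemma row2 (u : Fin 8 → ℝ) : ∑ k, u k * V k 2 = u 1 + u 2 + u 7 := by
  simp (config := {decide := true}) [Fin.sum_univ_eight, V, eL]
lemma row3 (u : Fin 8 → ℝ) : ∑ k, u k * V k 3 = u 2 + u 3 := by
  simp (config := {decide := true}) [Fin.sum_univ_eight, V, eL]
lemma row4 (u : Fin 8 → ℝ) : ∑ k, u k * V k 4 = u 4 + u 5 := by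
  simp (config := {decide := true}) [Fin.sum_univ_eight, V, eL]
lemma row5 (u : Fin 8 → ℝ) : ∑ k, u k * V k 5 = u 6 + u 7 := by
  simp (config := {decide := true}) [Fin.sum_univ_eight, V, eL]

lemma dV0 (a : Fin 6 → ℝ) : dotp a (V 0) = a 0 + a 1 := by
  simp (config := {decide := true}) [dotp, Fin.sum_univ_six, V, eL]
lemma dV1 (a : Fin 6 → ℝ) : dotp a (V 1) = a 1 + a 2 := by
  simp (config := {decide := true}) [dotp, Fin.sum_univ_six, V, eL]
lemma dV2 (a : Fin 6 → ℝ) : dotp a (V 2) = a 2 + a 3 := by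
  simp (config := {decide := true}) [dotp, Fin.sum_univ_six, V, eL]
lemma dV3 (a : Fin 6 → ℝ) : dotp a (V 3) = a 0 + a 3 := by
  simp (config := {decide := true}) [dotp, Fin.sum_univ_six, V, eL]
lemma dV4 (a : Fin 6 → ℝ) : dotp a (V 4) = a 0 + a 4 := by
  simp (config := {decide := true}) [dotp, Fin.sum_univ_six, V, eL]
lemma dV5 (a : Fin 6 → ℝ) : dotp a (V 5) = a 1 + a 4 := by
  simp (config := {decide := true}) [dotp, Fin.sum_univ_six, V, eL]
lemma dV6 (a : Fin 6 → ℝ) : dotp a (V 6) = a 1 + a 5 := by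
  simp (config := {decide := true}) [dotp, Fin.sum_univ_six, V, eL]
lemma dV7 (a : Fin 6 → ℝ) : dotp a (V 7) = a 2 + a 5 := by
  simp (config := {decide := true}) [dotp, Fin.sum_univ_six, V, eL]

lemma rho_comm {d : ℕ} (i j : Fin d) : rho i j = rho j i := by
  funext t; simp [rho, add_comm]

lemma V0 : V 0 = rho 0 1 := by
  funext c; fin_cases c <;> simp (config := {decide := true}) [V, eL, rho]
lemma V1 : V 1 = rho 1 2 := by
  funext c; fin_cases c <;> simp (config := {decide := true}) [V, eL, rho]
lemma V2 : V 2 = rho 2 3 := by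
  funext c; fin_cases c <;> simp (config := {decide := true}) [V, eL, rho]
lemma V3 : V 3 = rho 0 3 := by
  funext c; fin_cases c <;> simp (config := {decide := true}) [V, eL, rho]
lemma V4 : V 4 = rho 0 4 := by
  funext c; fin_cases c <;> simp (config := {decide := true}) [V, eL, rho]
lemma V5 : V 5 = rho 1 4 := by
  funext c; fin_cases c <;> simp (config := {decide := true}) [V, eL, rho]
lemma V6 : V 6 = rho 1 5 := by
  funext c; fin_cases c <;> simp (config := {decide := true}) [V, eL, rho]
lemma V7 : V 7 = rho 2 5 := by
  funext c; fin_cases c <;> simp (config := {decide := true}) [V, eL, rho]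

lemma dotp_isLinear {d : ℕ} (a : Fin d → ℝ) : IsLinearMap ℝ (dotp a) := by
  constructor
  · intro x y; simp [dotp, mul_add, Finset.sum_add_distrib]
  · intro c x; simp [dotp, Finset.mul_sum, mul_left_comm, smul_eq_mul]

lemma dotp_continuous {d : ℕ} (a : Fin d → ℝ) : Continuous (dotp a) := by
  unfold dotp
  exact continuous_finset_sum _ fun t _ => (continuous_const.mul (continuous_apply t))

lemma dotp_sum (a : Fin 6 → ℝ) (u : Fin 8 → ℝ) :
    dotp a (∑ k, u k • V k) = ∑ k, u k * dotp a (V k) := by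
  unfold dotp
  have h : ∀ c, (∑ k, u k • V k) c = ∑ k, u k * V k c := fun c => by
    simp [Finset.sum_apply]
  simp only [h, Finset.mul_sum]
  rw [Finset.sum_comm]
  exact Finset.sum_congr rfl fun k _ => Finset.sum_congr rfl fun c _ => by ring

lemma rep (Q : Fin 8 → Prop) (x : Fin 6 → ℝ)
    (hx : x ∈ convexHull ℝ {v : Fin 6 → ℝ | ∃ k, Q k ∧ v = V k}) :
    ∃ u : Fin 8 → ℝ, (∀ k, 0 ≤ u k) ∧ ∑ k, u k = 1 ∧ (∀ k, u k ≠ 0 → Q k) ∧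
      x = ∑ k, u k • V k := by
  classical
  rw [convexHull_eq] at hx
  obtain ⟨ι, tf, w, z, hw0, hw1, hzs, hxc⟩ := hx
  have hxs : x = ∑ i ∈ tf, w i • z i := by
    rw [← hxc, Finset.centerMass_eq_of_sum_1 _ _ hw1]
  choose κ hκQ hκV using fun i : {y // y ∈ tf} => (hzs i.1 i.2 : ∃ k, Q k ∧ z i.1 = V k)
  refine ⟨fun k => ∑ i ∈ tf.attach.filter (fun i => κ i = k), w i.1, ?_, ?_, ?_, ?_⟩
  · intro k
    exact Finset.sum_nonneg fun i _ => hw0 i.1 i.2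
  · rw [Finset.sum_fiberwise tf.attach κ (fun i => w i.1)]
    rw [Finset.sum_attach tf (fun i => w i)]
    exact hw1
  · intro k hk
    obtain ⟨i, hi, -⟩ := Finset.exists_ne_zero_of_sum_ne_zero hk
    have : κ i = k := (Finset.mem_filter.1 hi).2
    exact this ▸ hκQ i
  · have : ∀ k : Fin 8, (∑ i ∈ tf.attach.filter (fun i => κ i = k), w i.1) • V k
        = ∑ i ∈ tf.attach.filter (fun i => κ i = k), w i.1 • V (κ i) := by
      intro k
      rw [Finset.sum_smul]
      exact Finset.sum_congr rfl fun i hi => by rw [(Finset.mem_filter.1 hi).2]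
    simp only [this]
    rw [Finset.sum_fiberwise tf.attach κ (fun i => w i.1 • V (κ i))]
    have : ∑ i ∈ tf.attach, w i.1 • V (κ i) = ∑ i ∈ tf.attach, w i.1 • z i.1 :=
      Finset.sum_congr rfl fun i _ => by rw [← hκV i]
    rw [this, Finset.sum_attach tf (fun i => w i • z i)]
    exact hxs

lemma coord_eq (x : Fin 6 → ℝ) (u : Fin 8 → ℝ) (hxu : x = ∑ k, u k • V k) (c : Fin 6) :
    x c = ∑ k, u k * V k c := by
  rw [hxu]; simp [Finset.sum_apply]

lemma lattice (x : Fin 6 → ℝ) (hx : x ∈ convexHull ℝ (Set.range V))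
    (hint : ∀ c, ∃ z : ℤ, x c = (z : ℝ)) : ∃ k, x = V k := by
  have hx' : x ∈ convexHull ℝ {v : Fin 6 → ℝ | ∃ k, True ∧ v = V k} := by
    convert hx using 2
    ext v
    simp [Set.mem_range, eq_comm]
  obtain ⟨u, hu0, hu1, -, hxu⟩ := rep _ x hx'
  have e0 : x 0 = u 0 + u 3 + u 4 := (coord_eq x u hxu 0).trans (row0 u)
  have e1 : x 1 = u 0 + u 1 + u 5 + u 6 := (coord_eq x u hxu 1).trans (row1 u)
  have e2 : x 2 = u 1 + u 2 + u 7 := (coord_eq x u hxu 2).trans (row2 u)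
  have e3 : x 3 = u 2 + u 3 := (coord_eq x u hxu 3).trans (row3 u)
  have e4 : x 4 = u 4 + u 5 := (coord_eq x u hxu 4).trans (row4 u)
  have e5 : x 5 = u 6 + u 7 := (coord_eq x u hxu 5).trans (row5 u)
  have hsum1 : u 0 + u 1 + u 2 + u 3 + u 4 + u 5 + u 6 + u 7 = 1 := by
    have := hu1; rwa [Fin.sum_univ_eight] at this
  have hzero : ∀ c, x c = 0 ∨ x c = 1 := by
    intro c
    obtain ⟨z, hzc⟩ := hint c
    have h0 : 0 ≤ x c := by
      rw [coord_eq x u hxu c]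
      exact Finset.sum_nonneg fun k _ => mul_nonneg (hu0 k) (Vnn k c)
    have h1 : x c ≤ 1 := by
      rw [coord_eq x u hxu c]
      calc ∑ k, u k * V k c ≤ ∑ k, u k :=
            Finset.sum_le_sum fun k _ => by
              calc u k * V k c ≤ u k * 1 := mul_le_mul_of_nonneg_left (Vle1 k c) (hu0 k)
                _ = u k := mul_one _
        _ = 1 := hu1
    have hz0 : (0:ℤ) ≤ z := by exact_mod_cast hzc ▸ h0
    have hz1 : z ≤ 1 := by exact_mod_cast hzc ▸ h1
    interval_cases z
    · left; rw [hzc]; norm_num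
    · right; rw [hzc]; norm_num
  have u0 := hu0 0; have u1 := hu0 1; have u2 := hu0 2; have u3 := hu0 3
  have u4 := hu0 4; have u5 := hu0 5; have u6 := hu0 6; have u7 := hu0 7
  rcases hzero 0 with h₀ | h₀ <;> rcases hzero 1 with h₁ | h₁ <;>
    rcases hzero 2 with h₂ | h₂ <;> rcases hzero 3 with h₃ | h₃ <;>
    rcases hzero 4 with h₄ | h₄ <;> rcases hzero 5 with h₅ | h₅ <;>
    rw [h₀] at e0 <;> rw [h₁] at e1 <;> rw [h₂] at e2 <;> rw [h₃] at e3 <;>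
    rw [h₄] at e4 <;> rw [h₅] at e5
  all_goals first
    | (exfalso; linarith)
    | (refine ⟨0, funext fun c => ?_⟩; fin_cases c <;>
        simp (config := {decide := true}) [V, eL] <;> assumption)
    | (refine ⟨1, funext fun c => ?_⟩; fin_cases c <;>
        simp (config := {decide := true}) [V, eL] <;> assumption)
    | (refine ⟨2, funext fun c => ?_⟩; fin_cases c <;>
        simp (config := {decide := true}) [V, eL] <;> assumption)
    | (refine ⟨3, funext fun c => ?_⟩; fin_cases c <;>
        simp (config := {decide := true}) [V, eL] <;> assumption)
    | (refine ⟨4, funext fun c => ?_⟩; fin_cases c <;>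
        simp (config := {decide := true}) [V, eL] <;> assumption)
    | (refine ⟨5, funext fun c => ?_⟩; fin_cases c <;>
        simp (config := {decide := true}) [V, eL] <;> assumption)
    | (refine ⟨6, funext fun c => ?_⟩; fin_cases c <;>
        simp (config := {decide := true}) [V, eL] <;> assumption)
    | (refine ⟨7, funext fun c => ?_⟩; fin_cases c <;>
        simp (config := {decide := true}) [V, eL] <;> assumption)

lemma genEq : {x : Fin 6 → ℝ | ∃ i j, G5.Adj i j ∧ x = rho i j} = Set.range V := by
  ext x
  simp only [Set.mem_setOf_eq, Set.mem_range]
  constructor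
  · rintro ⟨i, j, hadj, rfl⟩
    rw [G5, SimpleGraph.fromRel_adj] at hadj
    obtain ⟨hne, hmem⟩ := hadj
    fin_cases i <;> fin_cases j <;>
      first
        | exact absurd rfl hne
        | exact absurd hmem (by decide)
        | exact ⟨0, V0⟩ | exact ⟨0, V0.trans (rho_comm 0 1)⟩
        | exact ⟨1, V1⟩ | exact ⟨1, V1.trans (rho_comm 1 2)⟩
        | exact ⟨2, V2⟩ | exact ⟨2, V2.trans (rho_comm 2 3)⟩
        | exact ⟨3, V3⟩ | exact ⟨3, V3.trans (rho_comm 0 3)⟩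
        | exact ⟨4, V4⟩ | exact ⟨4, V4.trans (rho_comm 0 4)⟩
        | exact ⟨5, V5⟩ | exact ⟨5, V5.trans (rho_comm 1 4)⟩
        | exact ⟨6, V6⟩ | exact ⟨6, V6.trans (rho_comm 1 5)⟩
        | exact ⟨7, V7⟩ | exact ⟨7, V7.trans (rho_comm 2 5)⟩
  · rintro ⟨k, rfl⟩
    have adj : ∀ i j : Fin 6, i ≠ j →
        ((i, j) ∈ ([(0, 1), (1, 2), (2, 3), (0, 3), (0, 4), (1, 4), (1, 5), (2, 5)] :
          List (Fin 6 × Fin 6))) → G5.Adj i j := by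
      intro i j h1 h2
      rw [G5, SimpleGraph.fromRel_adj]
      exact ⟨h1, Or.inl h2⟩
    fin_cases k
    · exact ⟨0, 1, adj 0 1 (by decide) (by decide), V0⟩
    · exact ⟨1, 2, adj 1 2 (by decide) (by decide), V1⟩
    · exact ⟨2, 3, adj 2 3 (by decide) (by decide), V2⟩
    · exact ⟨0, 3, adj 0 3 (by decide) (by decide), V3⟩
    · exact ⟨0, 4, adj 0 4 (by decide) (by decide), V4⟩
    · exact ⟨1, 4, adj 1 4 (by decide) (by decide), V5⟩
    · exact ⟨1, 5, adj 1 5 (by decide) (by decide), V6⟩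
    · exact ⟨2, 5, adj 2 5 (by decide) (by decide), V7⟩

def Conc (a : Fin 6 → ℝ) (b : ℝ) (p q : Fin 8) : Prop :=
  ((p = 0 ∧ q = 2) ∨ (p = 2 ∧ q = 0)) ∧ dotp a (V 1) = b ∧ dotp a (V 3) = b ∨
  ((p = 1 ∧ q = 3) ∨ (p = 3 ∧ q = 1)) ∧ dotp a (V 0) = b ∧ dotp a (V 2) = b

set_option maxHeartbeats 4000000 in
lemma pairLemma (a : Fin 6 → ℝ) (b t : ℝ) (u : Fin 8 → ℝ) (p q : Fin 8)
    (hp : b < dotp a (V p)) (hq : dotp a (V q) < b)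
    (ht0 : 0 < t) (ht1 : t < 1) (hu : ∀ k, 0 ≤ u k)
    (hz : ∀ k, u k ≠ 0 → dotp a (V k) = b)
    (heq : ∀ c, t * V p c + (1 - t) * V q c = ∑ k, u k * V k c) :
    Conc a b p q := by
  have hup : u p = 0 := by
    by_contra h
    exact absurd (hz p h) (by linarith)
  have huq : u q = 0 := by
    by_contra h
    exact absurd (hz q h) (by linarith)
  have E0 : t * V p 0 + (1 - t) * V q 0 = u 0 + u 3 + u 4 := (heq 0).trans (row0 u)
  have E1 : t * V p 1 + (1 - t) * V q 1 = u 0 + u 1 + u 5 + u 6 := (heq 1).trans (row1 u)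
  have E2 : t * V p 2 + (1 - t) * V q 2 = u 1 + u 2 + u 7 := (heq 2).trans (row2 u)
  have E3 : t * V p 3 + (1 - t) * V q 3 = u 2 + u 3 := (heq 3).trans (row3 u)
  have E4 : t * V p 4 + (1 - t) * V q 4 = u 4 + u 5 := (heq 4).trans (row4 u)
  have E5 : t * V p 5 + (1 - t) * V q 5 = u 6 + u 7 := (heq 5).trans (row5 u)
  have n0 := hu 0; have n1 := hu 1; have n2 := hu 2; have n3 := hu 3
  have n4 := hu 4; have n5 := hu 5; have n6 := hu 6; have n7 := hu 7
  clear heq hu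
  have h8 : ∀ r : Fin 8, r = 0 ∨ r = 1 ∨ r = 2 ∨ r = 3 ∨ r = 4 ∨ r = 5 ∨ r = 6 ∨ r = 7 := by
    decide
  unfold Conc
  rcases h8 p with rfl|rfl|rfl|rfl|rfl|rfl|rfl|rfl <;>
    rcases h8 q with rfl|rfl|rfl|rfl|rfl|rfl|rfl|rfl <;>
    simp (config := {decide := true}) only [V, eL] at E0 E1 E2 E3 E4 E5 <;>
    norm_num at E0 E1 E2 E3 E4 E5 <;>
    first
      | linarith
      | exact Or.inl ⟨Or.inl ⟨rfl, rfl⟩, hz 1 fun h => by linarith,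
          hz 3 fun h => by linarith⟩
      | exact Or.inl ⟨Or.inr ⟨rfl, rfl⟩, hz 1 fun h => by linarith,
          hz 3 fun h => by linarith⟩
      | exact Or.inr ⟨Or.inl ⟨rfl, rfl⟩, hz 0 fun h => by linarith,
          hz 2 fun h => by linarith⟩
      | exact Or.inr ⟨Or.inr ⟨rfl, rfl⟩, hz 0 fun h => by linarith,
          hz 2 fun h => by linarith⟩

/-- this graph has a 4-cycle, yet its edge polytope is indecomposable. -/
theorem stmt5 :
    ¬ ∃ (a : Fin 6 → ℝ) (b : ℝ), Decomposes (edgePolytope G5) a b := by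
  rintro ⟨a, b, hD⟩
  obtain ⟨-, ⟨y1, hy1, hy1b⟩, ⟨y2, hy2, hy2b⟩, hIntP, -⟩ := hD
  have hPS : edgePolytope G5 = convexHull ℝ (Set.range V) := by
    unfold edgePolytope; rw [genEq]
  rw [hPS] at hy1 hy2
  rw [IsIntegralSet, hPS] at hIntP
  have hneg : ∃ k, dotp a (V k) < b := by
    by_contra h
    push_neg at h
    have hsub : convexHull ℝ (Set.range V) ⊆ {x | b ≤ dotp a x} :=
      convexHull_min (by rintro v ⟨k, rfl⟩; exact h k)
        (convex_halfSpace_ge (dotp_isLinear a) b)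
    have := hsub hy1
    simp only [Set.mem_setOf_eq] at this
    linarith
  have hpos : ∃ k, b < dotp a (V k) := by
    by_contra h
    push_neg at h
    have hsub : convexHull ℝ (Set.range V) ⊆ {x | dotp a x ≤ b} :=
      convexHull_min (by rintro v ⟨k, rfl⟩; exact h k)
        (convex_halfSpace_le (dotp_isLinear a) b)
    have := hsub hy2
    simp only [Set.mem_setOf_eq] at this
    linarith
  have hPcomp : IsCompact (convexHull ℝ (Set.range V)) :=
    (Set.finite_range V).isCompact_convexHull ℝ
  have hHclosed : IsClosed {x : Fin 6 → ℝ | b ≤ dotp a x} :=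
    isClosed_le continuous_const (dotp_continuous a)
  have hCcomp : IsCompact (convexHull ℝ (Set.range V) ∩ {x | b ≤ dotp a x}) :=
    hPcomp.inter_right hHclosed
  have hCconv : Convex ℝ (convexHull ℝ (Set.range V) ∩ {x | b ≤ dotp a x}) :=
    (convex_convexHull ℝ _).inter (convex_halfSpace_ge (dotp_isLinear a) b)
  have hext : Set.extremePoints ℝ (convexHull ℝ (Set.range V) ∩ {x | b ≤ dotp a x}) ⊆
      {v : Fin 6 → ℝ | ∃ k, b ≤ dotp a (V k) ∧ v = V k} := by
    intro x hx
    have hxC := hx.1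
    have hint : ∀ c, ∃ z : ℤ, x c = (z : ℝ) := hIntP x hx
    obtain ⟨k, rfl⟩ := lattice x hxC.1 hint
    exact ⟨k, hxC.2, rfl⟩
  have hfin : Set.Finite {v : Fin 6 → ℝ | ∃ k, b ≤ dotp a (V k) ∧ v = V k} :=
    Set.Finite.subset (Set.finite_range V) (by rintro v ⟨k, -, rfl⟩; exact ⟨k, rfl⟩)
  have hclosed' :
      IsClosed (convexHull ℝ {v : Fin 6 → ℝ | ∃ k, b ≤ dotp a (V k) ∧ v = V k}) :=
    (hfin.isCompact_convexHull ℝ).isClosed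
  have hCsub : convexHull ℝ (Set.range V) ∩ {x | b ≤ dotp a x} ⊆
      convexHull ℝ {v : Fin 6 → ℝ | ∃ k, b ≤ dotp a (V k) ∧ v = V k} := by
    conv_lhs => rw [← closure_convexHull_extremePoints hCcomp hCconv]
    refine (closure_mono (convexHull_mono hext)).trans ?_
    rw [hclosed'.closure_eq]
  have key : ∀ p q : Fin 8, b < dotp a (V p) → dotp a (V q) < b → Conc a b p q := by
    intro p q hp hq
    set dp := dotp a (V p) with hdp
    set dq := dotp a (V q) with hdq
    have hd : 0 < dp - dq := by linarith
    set t := (b - dq) / (dp - dq) with htdef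
    have ht0 : 0 < t := div_pos (by linarith) hd
    have ht1 : t < 1 := (div_lt_one hd).2 (by linarith)
    have hcancel : t * (dp - dq) = b - dq := div_mul_cancel₀ _ (ne_of_gt hd)
    set y := t • V p + (1 - t) • V q with hy
    have hyP : y ∈ convexHull ℝ (Set.range V) :=
      (convex_convexHull ℝ (Set.range V)) (subset_convexHull ℝ _ ⟨p, rfl⟩)
        (subset_convexHull ℝ _ ⟨q, rfl⟩) ht0.le (by linarith) (by ring)
    have hyb : dotp a y = b := by
      have h1 : dotp a y = t * dp + (1 - t) * dq := by
        rw [hy, (dotp_isLinear a).map_add, (dotp_isLinear a).map_smul,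
          (dotp_isLinear a).map_smul]
        simp [smul_eq_mul]
        rfl
      rw [h1]
      linear_combination hcancel
    have hyC : y ∈ convexHull ℝ (Set.range V) ∩ {x | b ≤ dotp a x} :=
      ⟨hyP, by simp only [Set.mem_setOf_eq]; exact le_of_eq hyb.symm⟩
    obtain ⟨u, hu0, hu1, huQ, hyu⟩ := rep (fun k => b ≤ dotp a (V k)) y (hCsub hyC)
    have hsumb : ∑ k, u k * dotp a (V k) = b := by rw [← dotp_sum, ← hyu, hyb]
    have hzsum : ∑ k, u k * (dotp a (V k) - b) = 0 := by
      have hexp : ∑ k, u k * (dotp a (V k) - b)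
          = (∑ k, u k * dotp a (V k)) - (∑ k, u k) * b := by
        rw [Finset.sum_mul, ← Finset.sum_sub_distrib]
        exact Finset.sum_congr rfl fun k _ => by ring
      rw [hexp, hsumb, hu1, one_mul, sub_self]
    have hz : ∀ k, u k ≠ 0 → dotp a (V k) = b := by
      intro k hk
      have hnn : ∀ j ∈ Finset.univ, 0 ≤ u j * (dotp a (V j) - b) := by
        intro j _
        rcases eq_or_ne (u j) 0 with h | h
        · rw [h, zero_mul]
        · exact mul_nonneg (hu0 j) (by linarith [huQ j h])
      have hterm := (Finset.sum_eq_zero_iff_of_nonneg hnn).1 hzsum k (Finset.mem_univ k)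
      rcases mul_eq_zero.1 hterm with h | h
      · exact absurd h hk
      · linarith
    refine pairLemma a b t u p q hp hq ht0 ht1 hu0 hz ?_
    intro c
    calc t * V p c + (1 - t) * V q c = y c := by rw [hy]; simp [smul_eq_mul]
      _ = ∑ k, u k * V k c := by rw [hyu]; simp [Finset.sum_apply]
  obtain ⟨q0, hq0⟩ := hneg
  obtain ⟨p0, hp0⟩ := hpos
  have hkill : ∀ p q : Fin 8, Conc a b p q →
      (p = 0 ∧ q = 2) ∨ (p = 2 ∧ q = 0) ∨ (p = 1 ∧ q = 3) ∨ (p = 3 ∧ q = 1) := by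
    rintro p q (⟨h | h, -, -⟩ | ⟨h | h, -, -⟩)
    exacts [Or.inl h, Or.inr (Or.inl h), Or.inr (Or.inr (Or.inl h)),
      Or.inr (Or.inr (Or.inr h))]
  have hC0 := key p0 q0 hp0 hq0
  rcases hC0 with ⟨hpq | hpq, hz1, hz3⟩ | ⟨hpq | hpq, hz0, hz2⟩
  · obtain ⟨rfl, rfl⟩ := hpq
    have hall : ∀ k : Fin 8, k = 4 ∨ k = 5 ∨ k = 6 ∨ k = 7 → dotp a (V k) = b := by
      intro k hk
      rcases lt_trichotomy (dotp a (V k)) b with h | h | h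
      · have := hkill _ _ (key 0 k hp0 h)
        exfalso; rcases hk with rfl|rfl|rfl|rfl <;> revert this <;> decide
      · exact h
      · have := hkill _ _ (key k 2 h hq0)
        exfalso; rcases hk with rfl|rfl|rfl|rfl <;> revert this <;> decide
    have h4 := hall 4 (Or.inl rfl); have h5 := hall 5 (Or.inr (Or.inl rfl))
    have h6 := hall 6 (Or.inr (Or.inr (Or.inl rfl)))
    have h7 := hall 7 (Or.inr (Or.inr (Or.inr rfl)))
    rw [dV0 a] at hp0; rw [dV1 a] at hz1; rw [dV4 a] at h4
    rw [dV5 a] at h5; rw [dV6 a] at h6; rw [dV7 a] at h7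
    linarith
  · obtain ⟨rfl, rfl⟩ := hpq
    have hall : ∀ k : Fin 8, k = 4 ∨ k = 5 ∨ k = 6 ∨ k = 7 → dotp a (V k) = b := by
      intro k hk
      rcases lt_trichotomy (dotp a (V k)) b with h | h | h
      · have := hkill _ _ (key 2 k hp0 h)
        exfalso; rcases hk with rfl|rfl|rfl|rfl <;> revert this <;> decide
      · exact h
      · have := hkill _ _ (key k 0 h hq0)
        exfalso; rcases hk with rfl|rfl|rfl|rfl <;> revert this <;> decide
    have h4 := hall 4 (Or.inl rfl); have h5 := hall 5 (Or.inr (Or.inl rfl))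
    have h6 := hall 6 (Or.inr (Or.inr (Or.inl rfl)))
    have h7 := hall 7 (Or.inr (Or.inr (Or.inr rfl)))
    rw [dV0 a] at hq0; rw [dV1 a] at hz1; rw [dV4 a] at h4
    rw [dV5 a] at h5; rw [dV6 a] at h6; rw [dV7 a] at h7
    linarith
  · obtain ⟨rfl, rfl⟩ := hpq
    have hall : ∀ k : Fin 8, k = 4 ∨ k = 5 ∨ k = 6 ∨ k = 7 → dotp a (V k) = b := by
      intro k hk
      rcases lt_trichotomy (dotp a (V k)) b with h | h | h
      · have := hkill _ _ (key 1 k hp0 h)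
        exfalso; rcases hk with rfl|rfl|rfl|rfl <;> revert this <;> decide
      · exact h
      · have := hkill _ _ (key k 3 h hq0)
        exfalso; rcases hk with rfl|rfl|rfl|rfl <;> revert this <;> decide
    have h4 := hall 4 (Or.inl rfl); have h5 := hall 5 (Or.inr (Or.inl rfl))
    have h6 := hall 6 (Or.inr (Or.inr (Or.inl rfl)))
    have h7 := hall 7 (Or.inr (Or.inr (Or.inr rfl)))
    rw [dV1 a] at hp0; rw [dV0 a] at hz0; rw [dV2 a] at hz2; rw [dV4 a] at h4
    rw [dV5 a] at h5; rw [dV6 a] at h6; rw [dV7 a] at h7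
    linarith
  · obtain ⟨rfl, rfl⟩ := hpq
    have hall : ∀ k : Fin 8, k = 4 ∨ k = 5 ∨ k = 6 ∨ k = 7 → dotp a (V k) = b := by
      intro k hk
      rcases lt_trichotomy (dotp a (V k)) b with h | h | h
      · have := hkill _ _ (key 3 k hp0 h)
        exfalso; rcases hk with rfl|rfl|rfl|rfl <;> revert this <;> decide
      · exact h
      · have := hkill _ _ (key k 1 h hq0)
        exfalso; rcases hk with rfl|rfl|rfl|rfl <;> revert this <;> decide
    have h4 := hall 4 (Or.inl rfl); have h5 := hall 5 (Or.inr (Or.inl rfl))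
    have h6 := hall 6 (Or.inr (Or.inr (Or.inl rfl)))
    have h7 := hall 7 (Or.inr (Or.inr (Or.inr rfl)))
    rw [dV1 a] at hq0; rw [dV0 a] at hz0; rw [dV2 a] at hz2; rw [dV4 a] at h4
    rw [dV5 a] at h5; rw [dV6 a] at h6; rw [dV7 a] at h7
    linarith
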